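/- Suppose 1 - F is regularly varying at infinity with index -1/γ₁ and 1 - G is regularly varying at infinity with index -1/γ₂, where 0 < γ₁ < γ₂. Then the integral ∫_0^∞ dF(x)/(1 - G(x)) is finite, where F and G are continuous distribution functions of positive random variables with 1-G(x) > 0 for all x. -/

import Mathlib

open MeasureTheory Filter Set

lemma aux_tail (μ : Measure ℝ) [IsProbabilityMeasure μ] (F : ℝ → ℝ)
    (hF : F = fun t => (μ (Iic t)).toReal) (hFcont : Continuous F)
    (hμ0 : μ (Iic 0) = 0)
    {c : ℝ} (hc0 : 0 ≤ c) (hc1 : c < 1) :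
    μ {a | c < F a} ≤ ENNReal.ofReal (1 - c) := by
  have hF0 : F 0 = 0 := by simp [hF, hμ0]
  have hFtop : Tendsto F atTop (nhds 1) := by
    rw [hF]
    have h1 := tendsto_measure_Iic_atTop μ
    rw [measure_univ] at h1
    exact (ENNReal.tendsto_toReal ENNReal.one_ne_top).comp h1
  have hb : ∃ b : ℝ, 0 ≤ b ∧ c < F b := by
    have := hFtop.eventually_const_lt hc1
    rcases (this.and (eventually_ge_atTop (0:ℝ))).exists with ⟨b, hb1, hb2⟩
    exact ⟨b, hb2, hb1⟩
  obtain ⟨b, hb0, hbc⟩ := hb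
  have : c ∈ Icc (F 0) (F b) := ⟨by rw [hF0]; exact hc0, hbc.le⟩
  obtain ⟨x₀, _, hx₀⟩ := intermediate_value_Icc hb0 hFcont.continuousOn this
  have hmono : Monotone F := by
    intro a b hab
    simp only [hF]
    exact ENNReal.toReal_mono (measure_ne_top μ _) (measure_mono (Iic_subset_Iic.2 hab))
  have hsub : {a | c < F a} ⊆ Ioi x₀ := by
    intro a ha
    by_contra hle
    exact absurd (lt_of_lt_of_le ha (hx₀ ▸ hmono (not_lt.1 hle))) (lt_irrefl c)
  refine (measure_mono hsub).trans ?_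
  have hIic : μ (Iic x₀) = ENNReal.ofReal c := by
    rw [← hx₀, hF]
    exact (ENNReal.ofReal_toReal (measure_ne_top μ _)).symm
  have : μ (Ioi x₀) = 1 - ENNReal.ofReal c := by
    rw [← hIic, ← measure_univ (μ := μ), ← Iic_union_Ioi (a := x₀),
      measure_union (Iic_disjoint_Ioi le_rfl) measurableSet_Ioi]
    rw [ENNReal.add_sub_cancel_left (measure_ne_top μ _)]
  rw [this, ENNReal.ofReal_sub _ hc0, ENNReal.ofReal_one]

lemma aux_int (μ : Measure ℝ) [IsProbabilityMeasure μ] (F : ℝ → ℝ)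
    (hF : F = fun t => (μ (Iic t)).toReal) (hFcont : Continuous F)
    (hμ0 : μ (Iic 0) = 0) (hFlt : ∀ t, F t < 1)
    {δ : ℝ} (hδ0 : 0 < δ) (hδ1 : δ < 1) :
    Integrable (fun t => (1 - F t) ^ (-δ)) μ := by
  have hpos : ∀ t, 0 < 1 - F t := fun t => by linarith [hFlt t]
  have hδ0' : -δ < 0 := neg_neg_iff_pos.2 hδ0
  have hcont : Continuous (fun t => (1 - F t) ^ (-δ)) :=
    Continuous.rpow_const (continuous_const.sub hFcont) (fun t => Or.inl (hpos t).ne')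
  refine ⟨hcont.aestronglyMeasurable, ?_⟩
  have hnn : ∀ t, 0 ≤ (1 - F t) ^ (-δ) := fun t => Real.rpow_nonneg (hpos t).le _
  rw [hasFiniteIntegral_iff_norm]
  have heq : ∀ t, ENNReal.ofReal ‖(1 - F t) ^ (-δ)‖ = ENNReal.ofReal ((1 - F t) ^ (-δ)) :=
    fun t => by rw [Real.norm_of_nonneg (hnn t)]
  simp_rw [heq]
  rw [lintegral_eq_lintegral_meas_lt μ (Eventually.of_forall hnn) hcont.aemeasurable]
  -- key bound for s ≥ 1
  have key : ∀ s : ℝ, 1 ≤ s →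
      μ {a | s < (1 - F a) ^ (-δ)} ≤ ENNReal.ofReal (s ^ (-δ)⁻¹) := by
    intro s hs
    have hs0 : (0:ℝ) < s := lt_of_lt_of_le one_pos hs
    have hsd : 0 < s ^ (-δ)⁻¹ := Real.rpow_pos_of_pos hs0 _
    have hsd1 : s ^ (-δ)⁻¹ ≤ 1 := by
      apply Real.rpow_le_one_of_one_le_of_nonpos hs
      rw [inv_neg]
      exact (neg_nonpos.2 (inv_nonneg.2 hδ0.le))
    have hset : {a | s < (1 - F a) ^ (-δ)} = {a | 1 - s ^ (-δ)⁻¹ < F a} := by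
      ext a
      simp only [mem_setOf_eq]
      rw [← Real.lt_rpow_inv_iff_of_neg (hpos a) hs0 hδ0', sub_lt_comm]
    rw [hset]
    have := aux_tail μ F hF hFcont hμ0 (c := 1 - s ^ (-δ)⁻¹) (by linarith) (by linarith)
    refine this.trans (le_of_eq ?_)
    rw [sub_sub_cancel]
  calc ∫⁻ s in Ioi (0:ℝ), μ {a | s < (1 - F a) ^ (-δ)}
      = (∫⁻ s in Ioc (0:ℝ) 1, μ {a | s < (1 - F a) ^ (-δ)})
        + ∫⁻ s in Ioi (1:ℝ), μ {a | s < (1 - F a) ^ (-δ)} := by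
        rw [← lintegral_union measurableSet_Ioi (Ioc_disjoint_Ioi le_rfl),
          Ioc_union_Ioi_eq_Ioi zero_le_one]
    _ ≤ (∫⁻ _ in Ioc (0:ℝ) 1, 1)
        + ∫⁻ s in Ioi (1:ℝ), ENNReal.ofReal (s ^ (-δ)⁻¹) := by
        refine add_le_add (lintegral_mono fun s => prob_le_one) ?_
        refine setLIntegral_mono' measurableSet_Ioi fun s hs => key s (le_of_lt hs)
    _ < ⊤ := by
        apply ENNReal.add_lt_top.2
        constructor
        · simp [Real.volume_Ioc]
        · have hexp : (-δ)⁻¹ < -1 := by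
            rw [inv_neg, neg_lt_neg_iff]
            exact (one_lt_inv₀ hδ0).2 hδ1
          have hint := (integrableOn_Ioi_rpow_of_lt hexp one_pos).hasFiniteIntegral
          rw [hasFiniteIntegral_iff_norm] at hint
          refine lt_of_le_of_lt (le_of_eq ?_) hint
          apply setLIntegral_congr_fun measurableSet_Ioi
          intro s hs
          have hs0 : (0:ℝ) < s := lt_trans one_pos hs
          simp only [Real.norm_of_nonneg (Real.rpow_nonneg hs0.le _)]

theorem integrable_inv_Gbar
    (μ ν : Measure ℝ) [IsProbabilityMeasure μ] [IsProbabilityMeasure ν]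
    (F G : ℝ → ℝ)
    (hF : F = fun t => (μ (Iic t)).toReal)
    (hG : G = fun t => (ν (Iic t)).toReal)
    (hFcont : Continuous F) (hGcont : Continuous G)
    (hμpos : μ (Iic 0) = 0) (hνpos : ν (Iic 0) = 0)
    (hGbar_pos : ∀ x, G x < 1)
    (γ₁ γ₂ : ℝ) (hγ₁ : 0 < γ₁) (hγ₁₂ : γ₁ < γ₂)
    (hFrv : ∀ x > (0 : ℝ), Tendsto (fun t => (1 - F (t * x)) / (1 - F t))
      atTop (nhds (x ^ (-1 / γ₁))))
    (hGrv : ∀ x > (0 : ℝ), Tendsto (fun t => (1 - G (t * x)) / (1 - G t))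
      atTop (nhds (x ^ (-1 / γ₂)))) :
    Integrable (fun x => (1 - G x)⁻¹) μ := by
  have hγ₂ : 0 < γ₂ := lt_trans hγ₁ hγ₁₂
  have hGbar : ∀ t, 0 < 1 - G t := fun t => by linarith [hGbar_pos t]
  have hGmono : Monotone G := by
    intro a b hab
    simp only [hG]
    exact ENNReal.toReal_mono (measure_ne_top ν _) (measure_mono (Iic_subset_Iic.2 hab))
  have hFmono : Monotone F := by
    intro a b hab
    simp only [hF]
    exact ENNReal.toReal_mono (measure_ne_top μ _) (measure_mono (Iic_subset_Iic.2 hab))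
  have hFle1 : ∀ t, F t ≤ 1 := by
    intro t
    have : (μ (Iic t)).toReal ≤ (1 : ENNReal).toReal :=
      ENNReal.toReal_mono ENNReal.one_ne_top prob_le_one
    simpa [hF] using this
  -- 1 - F is everywhere positive
  have hFlt : ∀ t, F t < 1 := by
    intro t
    rcases lt_or_eq_of_le (hFle1 t) with h | h
    · exact h
    · exfalso
      have hev : (fun s => (1 - F (s * 2)) / (1 - F s)) =ᶠ[atTop] (fun _ => (0:ℝ)) := by
        filter_upwards [eventually_ge_atTop (max t 0)] with s hs
        have h1 : F s = 1 :=
          le_antisymm (hFle1 s) (h ▸ hFmono (le_trans (le_max_left _ _) hs))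
        rw [h1]; simp
      have h2 := (hFrv 2 two_pos).congr' hev
      have h3 : (2:ℝ) ^ (-1 / γ₁) = 0 :=
        tendsto_nhds_unique h2 tendsto_const_nhds
      exact absurd h3 (Real.rpow_pos_of_pos two_pos _).ne'
  have hFbar : ∀ t, 0 < 1 - F t := fun t => by linarith [hFlt t]
  -- choice of δ
  set δ : ℝ := (γ₁ / γ₂ + 1) / 2 with hδdef
  have hr1 : 0 < γ₁ / γ₂ := div_pos hγ₁ hγ₂
  have hr2 : γ₁ / γ₂ < 1 := (div_lt_one hγ₂).2 hγ₁₂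
  have hδ0 : 0 < δ := by rw [hδdef]; linarith
  have hδ1 : δ < 1 := by rw [hδdef]; linarith
  have hδ2 : γ₁ / γ₂ < δ := by rw [hδdef]; linarith
  -- the comparison function h
  set h : ℝ → ℝ := fun t => (1 - F t) ^ δ / (1 - G t) with hhdef
  have hhpos : ∀ t, 0 < h t := fun t =>
    div_pos (Real.rpow_pos_of_pos (hFbar t) _) (hGbar t)
  -- ratio tendsto
  have hGlim_ne : (2:ℝ) ^ (-1 / γ₂) ≠ 0 := (Real.rpow_pos_of_pos two_pos _).ne'
  have htend : Tendsto (fun t => h (t * 2) / h t) atTop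
      (nhds (((2:ℝ) ^ (-1 / γ₁)) ^ δ / (2:ℝ) ^ (-1 / γ₂))) := by
    have := ((hFrv 2 two_pos).rpow_const (Or.inr hδ0.le)).div (hGrv 2 two_pos) hGlim_ne
    refine this.congr fun t => ?_
    simp only [hhdef, Pi.div_apply]
    rw [Real.div_rpow (hFbar _).le (hFbar t).le]
    field_simp
  -- the limit is < 1
  have hc1 : ((2:ℝ) ^ (-1 / γ₁)) ^ δ / (2:ℝ) ^ (-1 / γ₂) < 1 := by
    rw [← Real.rpow_mul (by norm_num : (0:ℝ) ≤ 2), div_eq_mul_inv,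
      ← Real.rpow_neg (by norm_num : (0:ℝ) ≤ 2), ← Real.rpow_add two_pos]
    apply Real.rpow_lt_one_of_one_lt_of_neg one_lt_two
    have hlt : 1 * γ₁ < δ * γ₂ := by
      have := (div_lt_iff₀ hγ₂).1 hδ2
      linarith
    have : 1 / γ₂ < δ / γ₁ := (div_lt_div_iff₀ hγ₂ hγ₁).2 hlt
    have heq : -1 / γ₁ * δ + -(-1 / γ₂) = 1 / γ₂ - δ / γ₁ := by ring
    rw [heq]
    linarith
  -- eventual decay
  have hev2 : ∀ᶠ t in atTop, h (t * 2) ≤ h t := by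
    filter_upwards [htend.eventually_lt_const hc1] with t ht
    exact le_of_lt ((div_lt_one (hhpos t)).1 ht)
  obtain ⟨T₀, hT₀⟩ := eventually_atTop.1 hev2
  set T : ℝ := max T₀ 1 with hTdef
  have hT1 : (1:ℝ) ≤ T := le_max_right _ _
  have hT0 : (0:ℝ) < T := lt_of_lt_of_le one_pos hT1
  have hstep : ∀ t, T ≤ t → h (t * 2) ≤ h t := fun t ht =>
    hT₀ t (le_trans (le_max_left _ _) ht)
  -- bound on the compact part
  have hconth : Continuous h := by
    apply Continuous.div
    · exact Continuous.rpow_const (continuous_const.sub hFcont) (fun t => Or.inr hδ0.le)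
    · exact continuous_const.sub hGcont
    · exact fun t => (hGbar t).ne'
  obtain ⟨C, hC⟩ := (isCompact_Icc (a := T) (b := 2 * T)).exists_bound_of_continuousOn
    hconth.continuousOn
  set M : ℝ := max C 0 with hMdef
  have hMnn : 0 ≤ M := le_max_right _ _
  have hM : ∀ x ∈ Icc T (2 * T), h x ≤ M := fun x hx =>
    le_trans (le_trans (le_abs_self _) (by simpa [Real.norm_eq_abs] using hC x hx))
      (le_max_left _ _)
  -- induction: h ≤ M on [T, ∞)
  have key : ∀ n : ℕ, ∀ t, T ≤ t → t ≤ 2 ^ (n + 1) * T → h t ≤ M := by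
    intro n
    induction n with
    | zero =>
      intro t h1 h2
      rw [pow_one] at h2
      exact hM t ⟨h1, h2⟩
    | succ n ih =>
      intro t h1 h2
      rcases le_or_gt t (2 ^ (n + 1) * T) with h' | h'
      · exact ih t h1 h'
      · have h2n : (1:ℝ) ≤ 2 ^ n := one_le_pow₀ one_le_two
        have hps : (2:ℝ) ^ (n + 1) = 2 ^ n * 2 := pow_succ 2 n
        have hps2 : (2:ℝ) ^ (n + 1 + 1) = 2 ^ (n + 1) * 2 := pow_succ 2 (n + 1)
        have ht2 : T ≤ t / 2 := by
          rw [le_div_iff₀ (by norm_num : (0:ℝ) < 2)]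
          nlinarith
        have ht2' : t / 2 ≤ 2 ^ (n + 1) * T := by
          rw [div_le_iff₀ (by norm_num : (0:ℝ) < 2)]
          nlinarith
        have hs := hstep (t / 2) ht2
        rw [div_mul_cancel₀ _ (by norm_num : (2:ℝ) ≠ 0)] at hs
        exact hs.trans (ih _ ht2 ht2')
  have hbound : ∀ t, T ≤ t → h t ≤ M := by
    intro t ht
    obtain ⟨n, hn⟩ := pow_unbounded_of_one_lt (t / T) one_lt_two
    apply key n t ht
    have h1 : t < 2 ^ n * T := (div_lt_iff₀ hT0).1 hn
    have h2 : (2:ℝ) ^ n ≤ 2 ^ (n + 1) := by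
      have h2n : (0:ℝ) < 2 ^ n := by positivity
      rw [pow_succ]
      nlinarith
    nlinarith
  -- pointwise bound
  have hptw : ∀ t, (1 - G t)⁻¹ ≤ (1 - G T)⁻¹ + M * (1 - F t) ^ (-δ) := by
    intro t
    have hK : 0 ≤ (1 - F t) ^ (-δ) := Real.rpow_nonneg (hFbar t).le _
    rcases le_or_gt t T with h' | h'
    · have hle : 1 - G T ≤ 1 - G t := by linarith [hGmono h']
      have : (1 - G t)⁻¹ ≤ (1 - G T)⁻¹ := inv_anti₀ (hGbar T) hle
      nlinarith [mul_nonneg hMnn hK]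
    · have hht := hbound t h'.le
      have hFp : 0 < (1 - F t) ^ δ := Real.rpow_pos_of_pos (hFbar t) _
      have heq2 : (1 - G t)⁻¹ = ((1 - F t) ^ δ / (1 - G t)) * ((1 - F t) ^ δ)⁻¹ := by
        field_simp
      rw [Real.rpow_neg (hFbar t).le]
      have h2 : (1 - G t)⁻¹ ≤ M * ((1 - F t) ^ δ)⁻¹ := by
        rw [heq2]
        exact mul_le_mul_of_nonneg_right hht (inv_nonneg.2 hFp.le)
      have h3 : 0 ≤ (1 - G T)⁻¹ := inv_nonneg.2 (hGbar T).le
      linarith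
  -- conclude
  have hintK := aux_int μ F hF hFcont hμpos hFlt hδ0 hδ1
  have hg : Integrable (fun t => (1 - G T)⁻¹ + M * (1 - F t) ^ (-δ)) μ :=
    (integrable_const _).add (hintK.const_mul M)
  refine hg.mono' ?_ (ae_of_all _ ?_)
  · exact ((continuous_const.sub hGcont).inv₀ fun t => (hGbar t).ne').aestronglyMeasurable
  · intro t
    rw [Real.norm_of_nonneg (inv_nonneg.2 (hGbar t).le)]
    exact hptw t
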